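/- Let u and v be finite Lyndon words over a linearly ordered alphabet with u lexicographically smaller than v. Then for every natural number n ≥ 0, the word uⁿv is a Lyndon word. -/

import Mathlib

/-- A finite word is a Lyndon word if it is nonempty and lexicographically
strictly smaller than all of its proper nonempty suffixes. -/
def IsLyndon {A : Type*} [LinearOrder A] (w : List A) : Prop :=
  w ≠ [] ∧ ∀ i : ℕ, 0 < i → i < w.length → w < w.drop i

section aux
variable {A : Type*} [LinearOrder A]

lemma lex_append_left (u : List A) {s t : List A} (h : s < t) : u ++ s < u ++ t := by
  induction u with
  | nil => exact h
  | cons a l ih => exact List.Lex.cons ih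

lemma lex_append_or {u s : List A} (h : u < s) :
    u <+: s ∨ ∀ w w' : List A, u ++ w < s ++ w' := by
  replace h : List.Lex (·<·) u s := h
  induction h with
  | nil => exact Or.inl (List.nil_prefix)
  | @rel a l b l' hab => exact Or.inr fun w w' => List.Lex.rel hab
  | @cons a l l' h ih =>
    rcases ih with h' | h'
    · obtain ⟨t, rfl⟩ := h'
      exact Or.inl ⟨t, rfl⟩
    · exact Or.inr fun w w' => List.Lex.cons (h' w w')

lemma append_lt_right {u w : List A} (hne : u ≠ []) (hw : IsLyndon w) (h : u < w) :
    u ++ w < w := by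
  rcases lex_append_or h with hp | hgen
  · obtain ⟨t, rfl⟩ := hp
    have htne : t ≠ [] := by rintro rfl; simp at h
    have hlt : u.length < (u ++ t).length := by
      simp [List.length_append, List.length_pos_iff.mpr htne]
    have h2 := hw.2 u.length (by simpa [List.length_pos_iff] using hne) hlt
    rw [List.drop_left] at h2
    exact lex_append_left u h2
  · have := hgen w []
    simpa using this

lemma lyndon_append {u w : List A} (hu : IsLyndon u) (hw : IsLyndon w) (h : u < w) :
    IsLyndon (u ++ w) := by
  refine ⟨by simp [hu.1], fun i hi hilen => ?_⟩
  rcases lt_trichotomy i u.length with hiu | hiu | hiu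
  · rw [List.drop_append_of_le_length hiu.le]
    have hs := hu.2 i hi hiu
    rcases lex_append_or hs with hp | hgen
    · exfalso
      have := hp.length_le
      simp [List.length_drop] at this
      omega
    · exact hgen w w
  · subst hiu
    rw [List.drop_left]
    exact append_lt_right hu.1 hw h
  · have : i = u.length + (i - u.length) := by omega
    rw [this, List.drop_length_add_append]
    have hlt : i - u.length < w.length := by
      simp [List.length_append] at hilen; omega
    have := hw.2 (i - u.length) (by omega) hlt
    exact lt_trans (append_lt_right hu.1 hw h) this

end aux

theorem lyndon_pow_mul {A : Type*} [LinearOrder A] (u v : List A)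
    (hu : IsLyndon u) (hv : IsLyndon v) (huv : u < v) (n : ℕ) :
    IsLyndon ((List.replicate n u).flatten ++ v) := by
  induction n with
  | zero => simpa using hv
  | succ n ih =>
    rw [List.replicate_succ, List.flatten_cons, List.append_assoc]
    have hne : (List.replicate n u).flatten ++ v ≠ [] := ih.1
    have hlt : u < (List.replicate n u).flatten ++ v := by
      cases n with
      | zero => simpa using huv
      | succ m =>
        rw [List.replicate_succ, List.flatten_cons, List.append_assoc]
        have hne' : (List.replicate m u).flatten ++ v ≠ [] := by simp [hv.1]
        obtain ⟨a, l, hx⟩ := List.exists_cons_of_ne_nil hne'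
        have : ([] : List A) < (List.replicate m u).flatten ++ v := by
          rw [hx]; exact List.Lex.nil
        simpa using lex_append_left u this
    exact lyndon_append hu ih hlt
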